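/- Let F be a graph with at least one edge and let G be a graph such that there is no homomorphism from F to G. Let (H^m, σ_m) for m ≥ 1 be the sequence of F-coloured graphs obtained from the iterated gluing construction starting from any F-coloured graph (H, σ) with σ surjective. Then there exists m₀ (depending only on F and G) such that for all m ≥ m₀ there is no homomorphism from H^m to G. -/

import Mathlib

/-- One gluing step: `(H, σ)_e` for the edge `e = ab` of `F` is the disjoint union of
two copies of `(H, σ)` with all edges added between `σ⁻¹(a)` in one copy and `σ⁻¹(b)`
in the other copy (both ways). -/
def glueStep {β α : Type} (H : SimpleGraph β) (σ : β → α) (a b : α) :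
    SimpleGraph (β ⊕ β) where
  Adj x y :=
    match x, y with
    | Sum.inl x, Sum.inl y => H.Adj x y
    | Sum.inr x, Sum.inr y => H.Adj x y
    | Sum.inl x, Sum.inr y => (σ x = a ∧ σ y = b) ∨ (σ x = b ∧ σ y = a)
    | Sum.inr x, Sum.inl y => (σ y = a ∧ σ x = b) ∨ (σ y = b ∧ σ x = a)
  symm := by
    constructor
    rintro (x | x) (y | y) h
    · exact H.adj_symm h
    · exact h
    · exact h
    · exact H.adj_symm h
  loopless := by
    constructor
    rintro (x | x) h
    · exact H.irrefl h
    · exact H.irrefl h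

/-- The iterated gluing construction: `iterGlue H σ ens m` is the `F`-coloured graph
`(H^{m+1}, σ_{m+1})` obtained from `(H^1, σ_1) = (H, σ)` by `m` gluing steps, the
`(j+1)`-st step gluing along the edge `ens j` of `F`. -/
def iterGlue {β α : Type} (H : SimpleGraph β) (σ : β → α) (ens : ℕ → α × α) :
    (m : ℕ) → Σ V : Type, SimpleGraph V × (V → α)
  | 0 => ⟨β, H, σ⟩
  | m + 1 =>
      let p := iterGlue H σ ens m
      ⟨p.1 ⊕ p.1, glueStep p.2.1 p.2.2 (ens m).1 (ens m).2, Sum.elim p.2.2 p.2.2⟩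

section Aux
variable {β α γ : Type} {H : SimpleGraph β} {σ : β → α} {ens : ℕ → α × α}

/-- The left copy inclusion is a graph homomorphism. -/
def iterInl (m : ℕ) : (iterGlue H σ ens m).2.1 →g (iterGlue H σ ens (m+1)).2.1 :=
  ⟨Sum.inl, fun h => h⟩

/-- The right copy inclusion is a graph homomorphism. -/
def iterInr (m : ℕ) : (iterGlue H σ ens m).2.1 →g (iterGlue H σ ens (m+1)).2.1 :=
  ⟨Sum.inr, fun h => h⟩

lemma iterCross (m : ℕ) (x y : (iterGlue H σ ens m).1)
    (h : ((iterGlue H σ ens m).2.2 x = (ens m).1 ∧ (iterGlue H σ ens m).2.2 y = (ens m).2) ∨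
         ((iterGlue H σ ens m).2.2 x = (ens m).2 ∧ (iterGlue H σ ens m).2.2 y = (ens m).1)) :
    (iterGlue H σ ens (m+1)).2.1.Adj (Sum.inl x) (Sum.inr y) := h

end Aux

/-- Let `F` be a graph with at least one edge and `G` a graph with no
homomorphism from `F` to `G`.  Let `(H, σ)` be an `F`-coloured graph with `σ`
surjective, and let `ens` be a cyclic enumeration of the edges of `F` (with period
`k = |E(F)|`, every step giving an edge of `F`, and every edge of `F` occurring among
the first `k` steps).  Then there is `m₀` (depending only on `F` and `G`) such that
for all `m ≥ m₀` the graph `H^m` of the iterated gluing construction admits no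
homomorphism to `G`. -/
theorem stmt_13 {α β γ : Type} [Fintype α] [Fintype β] [Fintype γ]
    (F : SimpleGraph α) (G : SimpleGraph γ) (H : SimpleGraph β) (σ : β → α)
    (hF : F.edgeSet.Nonempty)
    (hσhom : ∀ x y, H.Adj x y → F.Adj (σ x) (σ y))
    (hσsurj : Function.Surjective σ)
    (hnohom : IsEmpty (F →g G))
    (k : ℕ) (hk : k = F.edgeSet.ncard)
    (ens : ℕ → α × α)
    (hens₁ : ∀ j, F.Adj (ens j).1 (ens j).2)
    (hens₂ : ∀ j, ens (j + k) = ens j)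
    (hens₃ : ∀ x y, F.Adj x y → ∃ j, j < k ∧ s((ens j).1, (ens j).2) = s(x, y)) :
    ∃ m₀ : ℕ, ∀ m, m₀ ≤ m →
      IsEmpty ((iterGlue H σ ens m).2.1 →g G) := by
  classical
  -- k is positive
  have hkpos : 1 ≤ k := by
    rw [hk]
    exact Set.ncard_pos (Set.toFinite _) |>.mpr hF
  -- the colourings are surjective at every level
  have hsurj : ∀ m, Function.Surjective (iterGlue H σ ens m).2.2 := by
    intro m
    induction m with
    | zero => exact hσsurj
    | succ m ih => intro a; obtain ⟨x, hx⟩ := ih a; exact ⟨Sum.inl x, hx⟩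
  -- periodicity of ens
  have hper : ∀ j t, ens (j + k * t) = ens j := by
    intro j t
    induction t with
    | zero => simp
    | succ t ih =>
        have : j + k * (t + 1) = (j + k * t) + k := by ring
        rw [this, hens₂, ih]
  -- key step : there is some level with no homomorphism
  have key : ∃ M, IsEmpty ((iterGlue H σ ens M).2.1 →g G) := by
    by_contra hcon
    push_neg at hcon
    have hne : ∀ m, Nonempty ((iterGlue H σ ens m).2.1 →g G) := fun m =>
      hcon m
    -- profiles of homomorphisms
    set prof : (m : ℕ) → ((iterGlue H σ ens m).2.1 →g G) → (α → Set γ) :=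
      fun m φ a => φ '' ((iterGlue H σ ens m).2.2 ⁻¹' {a}) with hprof
    set R : ℕ → Set (α → Set γ) :=
      fun m => { f | ∃ φ : (iterGlue H σ ens m).2.1 →g G, prof m φ ≤ f } with hR
    -- R is antitone
    have hprof_inl : ∀ m (φ : (iterGlue H σ ens (m+1)).2.1 →g G),
        prof m (φ.comp (iterInl m)) ≤ prof (m+1) φ := by
      intro m φ a u hu
      obtain ⟨x, hx, rfl⟩ := hu
      exact ⟨Sum.inl x, hx, rfl⟩
    have hprof_inr : ∀ m (φ : (iterGlue H σ ens (m+1)).2.1 →g G),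
        prof m (φ.comp (iterInr m)) ≤ prof (m+1) φ := by
      intro m φ a u hu
      obtain ⟨x, hx, rfl⟩ := hu
      exact ⟨Sum.inr x, hx, rfl⟩
    have hanti : ∀ m, R (m+1) ⊆ R m := by
      rintro m f ⟨φ, hφ⟩
      exact ⟨φ.comp (iterInl m), le_trans (hprof_inl m φ) hφ⟩
    have hanti' : ∀ m n, m ≤ n → R n ⊆ R m := by
      intro m n h
      induction n, h using Nat.le_induction with
      | base => exact subset_rfl
      | succ n hn ih => exact ih.trans' (hanti n)
    -- stabilization
    have hfin : ∀ m, (R m).Finite := fun m => Set.toFinite _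
    obtain ⟨M, hMcard⟩ : ∃ M, (R M).ncard = sInf (Set.range fun m => (R m).ncard) :=
      Nat.sInf_mem (Set.range_nonempty _)
    have hstab : ∀ m, M ≤ m → R m = R M := by
      intro m hm
      refine Set.eq_of_subset_of_ncard_le (hanti' M m hm) ?_ (hfin M)
      rw [hMcard]
      exact Nat.sInf_le ⟨m, rfl⟩
    -- R M is nonempty
    have hRM : (R M).Nonempty := by
      obtain ⟨φ⟩ := hne M
      exact ⟨prof M φ, φ, le_rfl⟩
    -- minimal element of R M
    obtain ⟨f, hfR, hfmin⟩ : ∃ f ∈ R M, ∀ g ∈ R M, id g ≤ id f → id f = id g := by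
      obtain ⟨f, hf⟩ := (hfin M).exists_minimal hRM
      exact ⟨f, hf.1, fun g hg hle => le_antisymm (hf.2 hg hle) hle⟩
    simp only [id] at hfmin
    -- values of f are nonempty
    have hfne : ∀ a, (f a).Nonempty := by
      intro a
      obtain ⟨φ, hφ⟩ := hfR
      obtain ⟨x, hx⟩ := hsurj M a
      exact ⟨φ x, hφ a ⟨x, hx, rfl⟩⟩
    -- key adjacency claim
    have hadj : ∀ a b, F.Adj a b → ∀ u ∈ f a, ∀ v ∈ f b, G.Adj u v := by
      intro a b hab u hu v hv
      obtain ⟨j0, hj0k, hj0⟩ := hens₃ a b hab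
      set j := j0 + k * M with hj
      have hjM : M ≤ j := le_trans (Nat.le_mul_of_pos_left M hkpos) (Nat.le_add_left _ _)
      have hensj : ens j = ens j0 := hper j0 M
      -- f is realizable at level j+1
      have hfR' : f ∈ R (j+1) := by rw [hstab (j+1) (le_trans hjM (Nat.le_succ j))]; exact hfR
      obtain ⟨φ, hφ⟩ := hfR'
      -- the two copy restrictions have profile exactly f
      have h1R : prof j (φ.comp (iterInl j)) ∈ R j := ⟨_, le_rfl⟩
      have h2R : prof j (φ.comp (iterInr j)) ∈ R j := ⟨_, le_rfl⟩
      rw [hstab j hjM] at h1R h2R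
      have h1 : f = prof j (φ.comp (iterInl j)) :=
        hfmin _ h1R (le_trans (hprof_inl j φ) hφ)
      have h2 : f = prof j (φ.comp (iterInr j)) :=
        hfmin _ h2R (le_trans (hprof_inr j φ) hφ)
      -- unpack u and v
      rw [h1] at hu
      rw [h2] at hv
      obtain ⟨x, hx, rfl⟩ := hu
      obtain ⟨y, hy, rfl⟩ := hv
      simp only [Set.mem_preimage, Set.mem_singleton_iff] at hx hy
      -- cross adjacency
      have hedge : ((ens j).1 = a ∧ (ens j).2 = b) ∨ ((ens j).1 = b ∧ (ens j).2 = a) := by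
        rw [hensj]; exact Sym2.eq_iff.mp hj0
      have : (iterGlue H σ ens (j+1)).2.1.Adj (Sum.inl x) (Sum.inr y) := by
        apply iterCross
        rcases hedge with ⟨h1e, h2e⟩ | ⟨h1e, h2e⟩
        · exact Or.inl ⟨hx.trans h1e.symm, hy.trans h2e.symm⟩
        · exact Or.inr ⟨hx.trans h2e.symm, hy.trans h1e.symm⟩
      exact φ.map_rel this
    -- build a homomorphism F → G, contradiction
    have : Nonempty (F →g G) := by
      refine ⟨⟨fun a => (hfne a).some, ?_⟩⟩
      intro a b hab
      exact hadj a b hab _ (hfne a).some_mem _ (hfne b).some_mem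
    exact hnohom.false this.some
  -- downward closedness finishes the proof
  obtain ⟨M, hM⟩ := key
  refine ⟨M, ?_⟩
  intro m hm
  induction m, hm using Nat.le_induction with
  | base => exact hM
  | succ m hm ih =>
      constructor
      intro φ
      exact ih.false (φ.comp (iterInl m))
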